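/- arXiv:1307.5944 — 2 statements merged into one kernel-verified Lean document; each statement's English description precedes it below -/
import Mathlib

section
/- One step of Dynamic Mirror Descent satisfies the per-round bound: ℓ_t(θ̂_t) − ℓ_t(θ_t) ≤ (1/η_t)[D(θ_t‖θ̂_t) − D(θ_{t+1}‖θ̂_{t+1})] + Δ_Φ/η_t + (2M/η_t)‖θ_{t+1} − Φ_t(θ_t)‖ + (η_t/(2σ))G². -/
open scoped RealInnerProductSpace
open Set Filter Topology

section helpers
variable {E : Type*} [NormedAddCommGroup E] [InnerProductSpace ℝ E]

lemma line_hasDerivAt {φ : E → ℝ} {L : E →L[ℝ] ℝ} {x : E} (hφ : HasFDerivAt φ L x) (v : E) :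
    HasDerivAt (fun t : ℝ => φ (x + t • v)) (L v) 0 := by
  have h1 : HasDerivAt (fun t : ℝ => x + t • v) v 0 := by
    simpa using ((hasDerivAt_id (0:ℝ)).smul_const v).const_add x
  have h2 : HasFDerivAt φ L (x + (0:ℝ) • v) := by simpa using hφ
  exact h2.comp_hasDerivAt 0 h1

lemma slope_limit_le {g : ℝ → ℝ} {g' C : ℝ} (hg : HasDerivAt g g' 0)
    (h : ∀ t : ℝ, t ∈ Ioc (0:ℝ) 1 → (g t - g 0) / t ≤ C) : g' ≤ C := by
  have htend : Filter.Tendsto (slope g 0) (𝓝[>] (0:ℝ)) (𝓝 g') :=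
    (hasDerivAt_iff_tendsto_slope.1 hg).mono_left
      (nhdsWithin_mono _ (fun t ht => ne_of_gt ht))
  refine le_of_tendsto htend ?_
  filter_upwards [Ioc_mem_nhdsGT (zero_lt_one)] with t ht
  simpa [slope_def_field, div_eq_inv_mul] using h t ht

lemma slope_limit_ge {g : ℝ → ℝ} {g' C : ℝ} (hg : HasDerivAt g g' 0)
    (h : ∀ t : ℝ, t ∈ Ioc (0:ℝ) 1 → C ≤ (g t - g 0) / t) : C ≤ g' := by
  have htend : Filter.Tendsto (slope g 0) (𝓝[>] (0:ℝ)) (𝓝 g') :=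
    (hasDerivAt_iff_tendsto_slope.1 hg).mono_left
      (nhdsWithin_mono _ (fun t ht => ne_of_gt ht))
  refine ge_of_tendsto htend ?_
  filter_upwards [Ioc_mem_nhdsGT (zero_lt_one)] with t ht
  simpa [slope_def_field, div_eq_inv_mul] using h t ht

lemma convex_grad_ineq {S : Set E} {φ : E → ℝ} {L : E →L[ℝ] ℝ}
    (hc : ConvexOn ℝ S φ) {x y : E} (hx : x ∈ S) (hy : y ∈ S)
    (hφ : HasFDerivAt φ L x) : φ x + L (y - x) ≤ φ y := by
  have hder := line_hasDerivAt hφ (y - x)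
  have key : L (y - x) ≤ φ y - φ x := by
    refine slope_limit_le hder ?_
    intro t ht
    have hco : φ ((1 - t) • x + t • y) ≤ (1 - t) * φ x + t * φ y :=
      hc.2 hx hy (by linarith [ht.2]) (le_of_lt ht.1) (by ring)
    have hxe : x + t • (y - x) = (1 - t) • x + t • y := by
      simp [smul_sub, sub_smul]; abel
    rw [hxe, div_le_iff₀ ht.1]
    simp only [zero_smul, add_zero]
    nlinarith [hco]
  linarith

lemma min_grad_ineq {S : Set E} (hS : Convex ℝ S) {F : E → ℝ} {L : E →L[ℝ] ℝ}
    {x y : E} (hx : x ∈ S) (hy : y ∈ S) (hmin : IsMinOn F S x)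
    (hF : HasFDerivAt F L x) : 0 ≤ L (y - x) := by
  have hder := line_hasDerivAt hF (y - x)
  refine slope_limit_ge hder ?_
  intro t ht
  have hxe : x + t • (y - x) = (1 - t) • x + t • y := by
    simp [smul_sub, sub_smul]; abel
  have hmem : x + t • (y - x) ∈ S := by
    rw [hxe]; exact hS hx hy (by linarith [ht.2]) (le_of_lt ht.1) (by ring)
  have hv := hmin hmem
  simp only [Set.mem_setOf_eq] at hv
  apply div_nonneg _ (le_of_lt ht.1)
  simp only [zero_smul, add_zero]
  linarith [hv]

end helpers

set_option maxHeartbeats 1000000 in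
/-- per-round bound for one step of Dynamic Mirror Descent (Lemma 1). -/
theorem dmd_per_round_bound
    {d : ℕ} (Θ : Set (EuclideanSpace ℝ (Fin d))) (hΘc : IsClosed Θ) (hΘ : Convex ℝ Θ)
    (f r ψ : EuclideanSpace ℝ (Fin d) → ℝ)
    (hf : Differentiable ℝ f) (hr : Differentiable ℝ r) (hψ : Differentiable ℝ ψ)
    (hfc : ConvexOn ℝ Θ f) (hrc : ConvexOn ℝ Θ r)
    (σ M G Δ η : ℝ) (hσ : 0 < σ) (hη : 0 < η)
    -- σ-strong convexity of ψ
    (hstrong : ∀ θ₁ ∈ Θ, ∀ θ₂ ∈ Θ,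
      ψ θ₁ ≥ ψ θ₂ + ⟪gradient ψ θ₂, θ₁ - θ₂⟫ + σ / 2 * ‖θ₁ - θ₂‖ ^ 2)
    -- gradient bounds (dual norm = Euclidean norm here)
    (hM : ∀ θ ∈ Θ, ‖gradient ψ θ‖ ≤ M)
    (hG : ∀ θ ∈ Θ, ‖gradient f θ + gradient r θ‖ ≤ G)
    -- Bregman divergence of ψ
    (D : EuclideanSpace ℝ (Fin d) → EuclideanSpace ℝ (Fin d) → ℝ)
    (hD : ∀ a b, D a b = ψ a - ψ b - ⟪gradient ψ b, a - b⟫)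
    -- the dynamical model and its distortion factor
    (Φ : EuclideanSpace ℝ (Fin d) → EuclideanSpace ℝ (Fin d))
    (hΦ : Set.MapsTo Φ Θ Θ)
    (hΔ : ∀ θ₁ ∈ Θ, ∀ θ₂ ∈ Θ, D (Φ θ₁) (Φ θ₂) - D θ₁ θ₂ ≤ Δ)
    -- the DMD update
    (θhat θtilNext θhatNext : EuclideanSpace ℝ (Fin d))
    (hθhat : θhat ∈ Θ) (hθtil : θtilNext ∈ Θ)
    (hmin : IsMinOn (fun θ => η * ⟪gradient f θhat, θ⟫ + η * r θ + D θ θhat) Θ θtilNext)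
    (hnext : θhatNext = Φ θtilNext)
    -- the comparator points
    (θt θtNext : EuclideanSpace ℝ (Fin d)) (hθt : θt ∈ Θ) (hθtNext : θtNext ∈ Θ) :
    (f θhat + r θhat) - (f θt + r θt) ≤
      (1 / η) * (D θt θhat - D θtNext θhatNext) + Δ / η
        + (2 * M / η) * ‖θtNext - Φ θt‖ + (η / (2 * σ)) * G ^ 2 := by
  set c : EuclideanSpace ℝ (Fin d) := gradient f θhat with hc
  set w := gradient r θhat with hw
  set u := gradient r θtilNext with hu
  set p := gradient ψ θtilNext with hp
  set q := gradient ψ θhat with hq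
  set g := gradient ψ θtNext with hg2
  set h := gradient ψ (Φ θtilNext) with hh
  -- convexity gradient inequalities
  have A1 : f θhat + ⟪c, θt - θhat⟫ ≤ f θt := by
    have := convex_grad_ineq hfc hθhat hθt (hf θhat).hasGradientAt.hasFDerivAt
    simpa only [InnerProductSpace.toDual_apply_apply] using this
  have A2 : r θhat + ⟪w, θtilNext - θhat⟫ ≤ r θtilNext := by
    have := convex_grad_ineq hrc hθhat hθtil (hr θhat).hasGradientAt.hasFDerivAt
    simpa only [InnerProductSpace.toDual_apply_apply] using this
  have A3 : r θtilNext + ⟪u, θt - θtilNext⟫ ≤ r θt := by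
    have := convex_grad_ineq hrc hθtil hθt (hr θtilNext).hasGradientAt.hasFDerivAt
    simpa only [InnerProductSpace.toDual_apply_apply] using this
  -- first-order optimality of the DMD update
  have hFeq : (fun θ => η * ⟪c, θ⟫ + η * r θ + D θ θhat)
      = (fun θ => η * ⟪c, θ⟫ + η * r θ + (ψ θ - ψ θhat - ⟪q, θ - θhat⟫)) :=
    funext fun θ => by rw [hD]
  rw [hFeq] at hmin
  have h1 : HasFDerivAt (fun θ : EuclideanSpace ℝ (Fin d) => η * ⟪c, θ⟫)
      (η • (InnerProductSpace.toDual ℝ (EuclideanSpace ℝ (Fin d)) c)) θtilNext := by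
    have := ((InnerProductSpace.toDual ℝ (EuclideanSpace ℝ (Fin d)) c).hasFDerivAt (x := θtilNext)).const_mul η
    simpa only [InnerProductSpace.toDual_apply_apply] using this
  have h2 : HasFDerivAt (fun θ : EuclideanSpace ℝ (Fin d) => η * r θ)
      (η • (InnerProductSpace.toDual ℝ (EuclideanSpace ℝ (Fin d)) u)) θtilNext :=
    ((hr θtilNext).hasGradientAt.hasFDerivAt).const_mul η
  have h3 : HasFDerivAt ψ (InnerProductSpace.toDual ℝ (EuclideanSpace ℝ (Fin d)) p) θtilNext :=
    (hψ θtilNext).hasGradientAt.hasFDerivAt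
  have h4 : HasFDerivAt (fun θ : EuclideanSpace ℝ (Fin d) => ⟪q, θ - θhat⟫)
      (InnerProductSpace.toDual ℝ (EuclideanSpace ℝ (Fin d)) q) θtilNext := by
    have := ((InnerProductSpace.toDual ℝ (EuclideanSpace ℝ (Fin d)) q).hasFDerivAt (x := θtilNext)).sub_const ⟪q, θhat⟫
    simpa only [InnerProductSpace.toDual_apply_apply, inner_sub_right] using this
  have hFd : HasFDerivAt (fun θ : EuclideanSpace ℝ (Fin d) => η * ⟪c, θ⟫ + η * r θ + (ψ θ - ψ θhat - ⟪q, θ - θhat⟫))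
      ((η • (InnerProductSpace.toDual ℝ (EuclideanSpace ℝ (Fin d)) c) + η • (InnerProductSpace.toDual ℝ (EuclideanSpace ℝ (Fin d)) u))
        + ((InnerProductSpace.toDual ℝ (EuclideanSpace ℝ (Fin d)) p) - (InnerProductSpace.toDual ℝ (EuclideanSpace ℝ (Fin d)) q))) θtilNext :=
    (h1.add h2).add ((h3.sub_const (ψ θhat)).sub h4)
  have B : 0 ≤ η * ⟪c, θt - θtilNext⟫ + η * ⟪u, θt - θtilNext⟫
      + (⟪p, θt - θtilNext⟫ - ⟪q, θt - θtilNext⟫) := by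
    have := min_grad_ineq hΘ hθtil hθt hmin hFd
    simpa only [ContinuousLinearMap.add_apply, ContinuousLinearMap.sub_apply,
      ContinuousLinearMap.smul_apply, InnerProductSpace.toDual_apply_apply, smul_eq_mul,
      add_assoc] using this
  -- three-point identity
  have tp : D θt θhat - D θt θtilNext - D θtilNext θhat
      = ⟪p, θt - θtilNext⟫ - ⟪q, θt - θtilNext⟫ := by
    simp only [hD, ← hp, ← hq, inner_sub_right]; ring
  -- strong convexity facts
  have S1 := hstrong θtilNext hθtil θhat hθhat
  have S2 := hstrong (Φ θt) (hΦ hθt) θtNext hθtNext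
  set x := ‖θhat - θtilNext‖ with hx
  have K4 : σ / 2 * x ^ 2 ≤ D θtilNext θhat := by
    rw [hD, hx, norm_sub_rev θhat]
    linarith [S1]
  -- Cauchy-Schwarz bounds
  have K3 : ⟪c + w, θhat - θtilNext⟫ ≤ G * x := by
    calc ⟪c + w, θhat - θtilNext⟫ ≤ ‖c + w‖ * x := real_inner_le_norm _ _
    _ ≤ G * x := mul_le_mul_of_nonneg_right (hG θhat hθhat) (norm_nonneg _)
  set v := θtNext - Φ θt with hv
  have CS2 : ⟪g, v⟫ - ⟪h, v⟫ ≤ 2 * M * ‖v‖ := by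
    have e1 : ⟪g, v⟫ ≤ M * ‖v‖ :=
      le_trans (real_inner_le_norm _ _)
        (mul_le_mul_of_nonneg_right (hM θtNext hθtNext) (norm_nonneg _))
    have e2 : -⟪h, v⟫ ≤ M * ‖v‖ := by
      have := abs_real_inner_le_norm h v
      have := mul_le_mul_of_nonneg_right (hM (Φ θtilNext) (hΦ hθtil)) (norm_nonneg v)
      have h3 := abs_le.1 (abs_real_inner_le_norm h v)
      linarith [h3.1, h3.2]
    linarith
  -- distortion/shift bound
  have hdist := hΔ θt hθt θtilNext hθtil
  have K5 : D θtNext θhatNext ≤ D θt θtilNext + Δ + 2 * M * ‖v‖ := by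
    rw [hnext]
    have e1 : D θtNext (Φ θtilNext) - D (Φ θt) (Φ θtilNext)
        = ψ θtNext - ψ (Φ θt) - ⟪h, v⟫ := by
      simp only [hD, ← hh, hv, inner_sub_right]; ring
    have hflip : ⟪g, Φ θt - θtNext⟫ = -⟪g, v⟫ := by
      simp only [hv, inner_sub_right]; ring
    have hσ2 : (0:ℝ) ≤ σ / 2 * ‖Φ θt - θtNext‖ ^ 2 := by positivity
    linarith [S2, CS2, hdist, e1]
  -- combine (scaled by η)
  set LHS := (f θhat + r θhat) - (f θt + r θt) with hLHS
  have K1 : LHS ≤ ⟪c + w, θhat - θtilNext⟫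
      + (⟪c, θtilNext - θt⟫ + ⟪u, θtilNext - θt⟫) := by
    simp only [hLHS, inner_add_left, inner_sub_right] at A1 A2 A3 ⊢
    linarith [A1, A2, A3]
  have K2 : η * (⟪c, θtilNext - θt⟫ + ⟪u, θtilNext - θt⟫)
      ≤ D θt θhat - D θt θtilNext - D θtilNext θhat := by
    rw [tp]
    have e : ⟪c, θtilNext - θt⟫ + ⟪u, θtilNext - θt⟫
        = -(⟪c, θt - θtilNext⟫ + ⟪u, θt - θtilNext⟫) := by
      simp only [inner_sub_right]; ring
    rw [e]
    linarith [B]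
  have quad : η * (G * x) ≤ σ / 2 * x ^ 2 + η ^ 2 * G ^ 2 / (2 * σ) := by
    rw [← sub_nonneg]
    have key : σ / 2 * x ^ 2 + η ^ 2 * G ^ 2 / (2 * σ) - η * (G * x)
        = (σ * x - η * G) ^ 2 / (2 * σ) := by field_simp; ring
    rw [key]; positivity
  have K1η := mul_le_mul_of_nonneg_left K1 hη.le
  have K3η := mul_le_mul_of_nonneg_left K3 hη.le
  have main : η * LHS ≤ (D θt θhat - D θtNext θhatNext) + Δ + 2 * M * ‖v‖
      + η ^ 2 * G ^ 2 / (2 * σ) := by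
    have e1 : η * LHS ≤ η * inner ℝ (c + w) (θhat - θtilNext)
        + η * (inner ℝ c (θtilNext - θt) + inner ℝ u (θtilNext - θt)) := by linarith [K1η]
    nlinarith [e1, K2, K3η, K4, K5, quad]
  have hRHS : η * ((1 / η) * (D θt θhat - D θtNext θhatNext) + Δ / η
        + (2 * M / η) * ‖θtNext - Φ θt‖ + (η / (2 * σ)) * G ^ 2)
      = (D θt θhat - D θtNext θhatNext) + Δ + 2 * M * ‖v‖ + η ^ 2 * G ^ 2 / (2 * σ) := by
    rw [hv]
    field_simp
  have final := main.trans_eq hRHS.symm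
  exact le_of_mul_le_mul_left final hη
end

section
/- Zinkevich's online gradient descent bound: let 𝒜 ⊂ ℝ^n be a closed convex set of diameter at most R, let g_t: 𝒜 → ℝ be convex with ‖∇g_t(α)‖₂ ≤ G for all α ∈ 𝒜, and define α̂_{t+1} = proj_𝒜(α̂_t − ρ_t ∇g_t(α̂_t)) with ρ_t = ρ/√t for ρ > 0. Then for any fixed α ∈ 𝒜, Σ_{t=1}^T [g_t(α̂_t) − g_t(α)] ≤ R²√T/(2ρ) + ρG²(2√T − 1)/2... in particular the regret is at most C√T for a constant C depending only on R, G, ρ. -/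
open Finset
open RealInnerProductSpace

-- gradient inequality for convex differentiable functions
lemma grad_ineq' {n : ℕ} {s : Set (EuclideanSpace ℝ (Fin n))}
    {f : EuclideanSpace ℝ (Fin n) → ℝ} (hd : Differentiable ℝ f) (hc : ConvexOn ℝ s f)
    {x y : EuclideanSpace ℝ (Fin n)} (hx : x ∈ s) (hy : y ∈ s) :
    ⟪gradient f x, y - x⟫ ≤ f y - f x := by
  rcases eq_or_ne x y with rfl | hne
  · simp
  set c : ℝ →ᵃ[ℝ] EuclideanSpace ℝ (Fin n) := AffineMap.lineMap x y
  have hφ : ConvexOn ℝ (c ⁻¹' s) (f ∘ c) := hc.comp_affineMap c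
  have h0 : (0:ℝ) ∈ c ⁻¹' s := by simp [c, Set.mem_preimage, AffineMap.lineMap_apply_zero, hx]
  have h1 : (1:ℝ) ∈ c ⁻¹' s := by simp [c, Set.mem_preimage, AffineMap.lineMap_apply_one, hy]
  have hcd : HasDerivAt (fun s : ℝ => s • (y - x) + x) (y - x) 0 := by
    simpa using ((hasDerivAt_id (0:ℝ)).smul_const (y - x)).add_const x
  have hfd : HasFDerivAt f (InnerProductSpace.toDual ℝ _ (gradient f x)) x :=
    hasGradientAt_iff_hasFDerivAt.mp (hd x).hasGradientAt
  have hcomp : HasDerivAt (f ∘ c) ⟪gradient f x, y - x⟫ 0 := by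
    have hfd' : HasFDerivAt f (InnerProductSpace.toDual ℝ _ (gradient f x)) ((0:ℝ) • (y - x) + x) := by
      simpa using hfd
    have h2 := hfd'.comp_hasDerivAt (x := (0:ℝ)) hcd
    have heq : f ∘ c = f ∘ (fun s : ℝ => s • (y - x) + x) := by
      funext s
      simp [c, Function.comp, AffineMap.lineMap_apply, vsub_eq_sub, vadd_eq_add]
    rw [heq]
    simpa [InnerProductSpace.toDual_apply_apply] using h2
  have := hφ.le_slope_of_hasDerivAt h0 h1 one_pos hcomp
  simpa [slope_def_field, c, Function.comp, AffineMap.lineMap_apply_zero,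
    AffineMap.lineMap_apply_one] using this

lemma proj_sq_le {n : ℕ} {s : Set (EuclideanSpace ℝ (Fin n))} (hs : Convex ℝ s)
    {y m α : EuclideanSpace ℝ (Fin n)} (hm : m ∈ s) (hα : α ∈ s)
    (hmin : ∀ a ∈ s, ‖m - y‖ ≤ ‖a - y‖) : ‖m - α‖ ^ 2 ≤ ‖y - α‖ ^ 2 := by
  haveI : Nonempty s := ⟨⟨m, hm⟩⟩
  have hinf : ‖y - m‖ = ⨅ w : s, ‖y - w‖ := by
    refine le_antisymm ?_ ?_
    · exact le_ciInf fun w => by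
        simpa [norm_sub_rev] using hmin w w.2
    · exact ciInf_le ⟨0, fun _ ⟨w, h⟩ => h ▸ norm_nonneg _⟩ (⟨m, hm⟩ : s)
  have hvar : ⟪y - m, α - m⟫ ≤ 0 :=
    (norm_eq_iInf_iff_real_inner_le_zero hs hm).mp hinf α hα
  have hexp : ‖y - α‖ ^ 2 = ‖y - m‖ ^ 2 - 2 * ⟪y - m, α - m⟫ + ‖α - m‖ ^ 2 := by
    have : y - α = (y - m) - (α - m) := by abel
    rw [this, @norm_sub_sq_real]
  have h2 : ‖m - α‖ ^ 2 = ‖α - m‖ ^ 2 := by rw [norm_sub_rev]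
  nlinarith [sq_nonneg ‖y - m‖]

lemma sumA (d : ℕ → ℝ) (R2 : ℝ) (hd0 : ∀ t, 1 ≤ t → 0 ≤ d t) (hdR : ∀ t, 1 ≤ t → d t ≤ R2) :
    ∀ T : ℕ, 1 ≤ T → ∑ t ∈ Finset.Icc 1 T, Real.sqrt (t : ℝ) * (d t - d (t + 1)) ≤
      R2 * Real.sqrt (T : ℝ) - Real.sqrt (T : ℝ) * d (T + 1) := by
  intro T hT
  induction T, hT using Nat.le_induction with
  | base =>
    simp only [Finset.Icc_self, Finset.sum_singleton, Nat.cast_one, Real.sqrt_one]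
    have := hdR 1 le_rfl
    linarith
  | succ T hT ih =>
    rw [Finset.sum_Icc_succ_top (by omega : 1 ≤ T + 1)]
    have hs : Real.sqrt T ≤ Real.sqrt (T + 1 : ℕ) :=
      Real.sqrt_le_sqrt (by push_cast; linarith)
    have h1 := hd0 (T + 1) (by omega)
    have h2 := hdR (T + 1) (by omega)
    nlinarith [Real.sqrt_nonneg (T : ℝ), Real.sqrt_nonneg ((T + 1 : ℕ) : ℝ)]

lemma sumB : ∀ T : ℕ, 1 ≤ T →
    ∑ t ∈ Finset.Icc 1 T, 1 / Real.sqrt (t : ℝ) ≤ 2 * Real.sqrt (T : ℝ) - 1 := by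
  intro T hT
  induction T, hT using Nat.le_induction with
  | base => norm_num
  | succ T hT ih =>
    rw [Finset.sum_Icc_succ_top (by omega : 1 ≤ T + 1)]
    have ha : (0:ℝ) < Real.sqrt ((T + 1 : ℕ) : ℝ) := by
      apply Real.sqrt_pos.mpr; push_cast; positivity
    have hsa : Real.sqrt ((T + 1 : ℕ) : ℝ) ^ 2 = (T : ℝ) + 1 := by
      rw [Real.sq_sqrt (by push_cast; positivity)]; push_cast; ring
    have hsb : Real.sqrt (T : ℝ) ^ 2 = (T : ℝ) := Real.sq_sqrt (by positivity)
    have key : 1 / Real.sqrt ((T + 1 : ℕ) : ℝ) ≤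
        2 * Real.sqrt ((T + 1 : ℕ) : ℝ) - 2 * Real.sqrt (T : ℝ) := by
      rw [div_le_iff₀ ha]
      nlinarith [sq_nonneg (Real.sqrt ((T + 1 : ℕ) : ℝ) - Real.sqrt (T : ℝ)),
        Real.sqrt_nonneg (T : ℝ)]
    linarith

lemma arith_step {st ρ I dt dt1 N G : ℝ} (hst : 0 < st) (hρ : 0 < ρ) (hN : 0 ≤ N) (hNG : N ≤ G)
    (hA : dt1 ≤ dt - 2 * (ρ / st) * I + (ρ / st) ^ 2 * N ^ 2) :
    I ≤ st / (2 * ρ) * (dt - dt1) + ρ * G ^ 2 / 2 * (1 / st) := by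
  have h := mul_le_mul_of_nonneg_left
    (show 2 * (ρ / st) * I ≤ dt - dt1 + (ρ / st) ^ 2 * N ^ 2 by linarith)
    (le_of_lt (show (0:ℝ) < st / (2 * ρ) by positivity))
  have e1 : st / (2 * ρ) * (2 * (ρ / st) * I) = I := by field_simp
  have e2 : st / (2 * ρ) * (dt - dt1 + (ρ / st) ^ 2 * N ^ 2) =
      st / (2 * ρ) * (dt - dt1) + ρ * N ^ 2 / 2 * (1 / st) := by field_simp
  have e3 : ρ * N ^ 2 / 2 * (1 / st) ≤ ρ * G ^ 2 / 2 * (1 / st) := by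
    have hN2 : N ^ 2 ≤ G ^ 2 := by nlinarith
    exact mul_le_mul_of_nonneg_right (by nlinarith) (by positivity)
  rw [e1, e2] at h
  linarith

/-- Zinkevich's online gradient descent regret bound. -/
theorem zinkevich_ogd
    {n : ℕ} (𝒜 : Set (EuclideanSpace ℝ (Fin n))) (h𝒜c : IsClosed 𝒜) (h𝒜 : Convex ℝ 𝒜)
    (h𝒜ne : 𝒜.Nonempty)
    (R G ρ : ℝ) (hR : 0 < R) (hG : 0 < G) (hρ : 0 < ρ)
    (hdiam : ∀ a ∈ 𝒜, ∀ b ∈ 𝒜, ‖a - b‖ ≤ R)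
    (g : ℕ → EuclideanSpace ℝ (Fin n) → ℝ)
    (hgd : ∀ t, Differentiable ℝ (g t))
    (hgc : ∀ t, ConvexOn ℝ 𝒜 (g t))
    (hgG : ∀ t, ∀ a ∈ 𝒜, ‖gradient (g t) a‖ ≤ G)
    (ρt : ℕ → ℝ) (hρt : ∀ t : ℕ, ρt t = ρ / Real.sqrt t)
    (αhat : ℕ → EuclideanSpace ℝ (Fin n)) (hα1 : αhat 1 ∈ 𝒜)
    -- αhat (t+1) is the Euclidean projection of the gradient step onto 𝒜
    (hproj : ∀ t : ℕ, 1 ≤ t → αhat (t + 1) ∈ 𝒜 ∧ ∀ a ∈ 𝒜,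
      ‖αhat (t + 1) - (αhat t - ρt t • gradient (g t) (αhat t))‖ ≤
        ‖a - (αhat t - ρt t • gradient (g t) (αhat t))‖)
    (T : ℕ) (hT : 1 ≤ T) :
    ∀ α ∈ 𝒜, ∑ t ∈ Finset.Icc 1 T, (g t (αhat t) - g t α) ≤
      R ^ 2 * Real.sqrt T / (2 * ρ) + ρ * G ^ 2 * (2 * Real.sqrt T - 1) / 2 := by
  intro α hα
  have hmem : ∀ t : ℕ, 1 ≤ t → αhat t ∈ 𝒜 := by
    intro t ht
    induction t, ht using Nat.le_induction with
    | base => exact hα1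
    | succ t ht ih => exact (hproj t ht).1
  set d : ℕ → ℝ := fun t => ‖αhat t - α‖ ^ 2 with hd
  have hd0 : ∀ t : ℕ, 1 ≤ t → 0 ≤ d t := fun t _ => sq_nonneg _
  have hdR : ∀ t : ℕ, 1 ≤ t → d t ≤ R ^ 2 := fun t ht =>
    pow_le_pow_left₀ (norm_nonneg _) (hdiam _ (hmem t ht) _ hα) 2
  -- per-step bound
  have step : ∀ t : ℕ, 1 ≤ t → g t (αhat t) - g t α ≤
      Real.sqrt (t : ℝ) / (2 * ρ) * (d t - d (t + 1)) +
        ρ * G ^ 2 / 2 * (1 / Real.sqrt (t : ℝ)) := by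
    intro t ht
    set st := Real.sqrt (t : ℝ) with hst
    have hstpos : 0 < st := Real.sqrt_pos.mpr (by exact_mod_cast Nat.pos_of_ne_zero (by omega))
    set gr := gradient (g t) (αhat t) with hgr
    set I := ⟪gr, αhat t - α⟫ with hI
    -- convexity step
    have hcvx : g t (αhat t) - g t α ≤ I := by
      have h := grad_ineq' (hgd t) (hgc t) (hmem t ht) hα
      have : ⟪gr, α - αhat t⟫ = -I := by
        rw [hI, ← inner_neg_right]; congr 1; abel
      linarith [this ▸ h]
    -- projection step
    have hpj : d (t + 1) ≤ ‖(αhat t - ρt t • gr) - α‖ ^ 2 := by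
      have hmin := (hproj t ht).2
      exact proj_sq_le h𝒜 (hproj t ht).1 hα (fun a ha => hmin a ha)
    -- expansion
    have hexp : ‖(αhat t - ρt t • gr) - α‖ ^ 2 =
        d t - 2 * ρt t * I + (ρt t) ^ 2 * ‖gr‖ ^ 2 := by
      have h1 : (αhat t - ρt t • gr) - α = (αhat t - α) - ρt t • gr := by abel
      rw [h1, @norm_sub_sq_real, real_inner_smul_right, norm_smul, real_inner_comm]
      simp only [hd, Real.norm_eq_abs, mul_pow, sq_abs, ← hI]
      ring
    have hA : d (t + 1) ≤ d t - 2 * (ρ / st) * I + (ρ / st) ^ 2 * ‖gr‖ ^ 2 := by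
      rw [← hρt t]; exact hpj.trans_eq hexp
    have := arith_step hstpos hρ (norm_nonneg gr) (hgG t _ (hmem t ht)) hA
    linarith
  calc ∑ t ∈ Finset.Icc 1 T, (g t (αhat t) - g t α)
      ≤ ∑ t ∈ Finset.Icc 1 T, (Real.sqrt (t : ℝ) / (2 * ρ) * (d t - d (t + 1)) +
          ρ * G ^ 2 / 2 * (1 / Real.sqrt (t : ℝ))) :=
        Finset.sum_le_sum fun t htm => step t (Finset.mem_Icc.mp htm).1
    _ = (1 / (2 * ρ)) * ∑ t ∈ Finset.Icc 1 T, Real.sqrt (t : ℝ) * (d t - d (t + 1)) +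
          ρ * G ^ 2 / 2 * ∑ t ∈ Finset.Icc 1 T, 1 / Real.sqrt (t : ℝ) := by
        rw [Finset.mul_sum, Finset.mul_sum, ← Finset.sum_add_distrib]
        exact Finset.sum_congr rfl fun t _ => by ring
    _ ≤ (1 / (2 * ρ)) * (R ^ 2 * Real.sqrt (T : ℝ) - Real.sqrt (T : ℝ) * d (T + 1)) +
          ρ * G ^ 2 / 2 * (2 * Real.sqrt (T : ℝ) - 1) := by
        have hA := sumA d (R ^ 2) hd0 hdR T hT
        have hB := sumB T hT
        have h1 : (0:ℝ) < 1 / (2 * ρ) := by positivity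
        have h2 : (0:ℝ) ≤ ρ * G ^ 2 / 2 := by positivity
        exact add_le_add (mul_le_mul_of_nonneg_left hA h1.le)
          (mul_le_mul_of_nonneg_left hB h2)
    _ ≤ R ^ 2 * Real.sqrt T / (2 * ρ) + ρ * G ^ 2 * (2 * Real.sqrt T - 1) / 2 := by
        have h3 : 0 ≤ Real.sqrt (T : ℝ) * d (T + 1) :=
          mul_nonneg (Real.sqrt_nonneg _) (hd0 (T + 1) (by omega))
        have h1 : (0:ℝ) < 1 / (2 * ρ) := by positivity
        have e4 : 0 ≤ 1 / (2 * ρ) * (Real.sqrt (T : ℝ) * d (T + 1)) := mul_nonneg h1.le h3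
        have e5 : 1 / (2 * ρ) * (R ^ 2 * Real.sqrt (T : ℝ) - Real.sqrt (T : ℝ) * d (T + 1)) =
            R ^ 2 * Real.sqrt (T : ℝ) / (2 * ρ) - 1 / (2 * ρ) * (Real.sqrt (T : ℝ) * d (T + 1)) := by
          ring
        have e6 : ρ * G ^ 2 / 2 * (2 * Real.sqrt (T : ℝ) - 1) =
            ρ * G ^ 2 * (2 * Real.sqrt (T : ℝ) - 1) / 2 := by ring
        linarith
end
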